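/- Theorem 2 (MSE bound for the IHT estimator, non-asymptotic form): If λ ≤ π_k for every k ∈ U with λ > 0, |y_k| ≤ C for every k ∈ U, and |π_{kl} − π_k π_l| ≤ M for all k ≠ l, then E[(N⁻¹ t̂_IHT − N⁻¹ t_y)²] ≤ C² K² / N² + C²/(λ N) + C² M / λ². -/

import Mathlib

open MeasureTheory

lemma iht_arith (n k c l m : ℝ) (hn : n ≠ 0) (hl : l ≠ 0) :
    (n⁻¹)^2 * ((k*c)^2 + (n * (c^2/l) + n^2 * (m * c^2 / l^2)))
      = c ^ 2 * k ^ 2 / n ^ 2 + c ^ 2 / (l * n) + c ^ 2 * m / l ^ 2 := by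
  field_simp
  ring

/-- Theorem 2 (MSE bound for the IHT estimator, non-asymptotic form):
if `λ ≤ π_k` with `λ > 0`, `|y_k| ≤ C`, and `|π_{kl} − π_k π_l| ≤ M` for all `k ≠ l`, then
`E[(N⁻¹ t̂_IHT − N⁻¹ t_y)²] ≤ C² K²/N² + C²/(λ N) + C² M / λ²`. -/
theorem iht_mse_bound
    {Ω : Type*} [MeasurableSpace Ω] (μ : Measure Ω) [IsProbabilityMeasure μ]
    (N : ℕ) (y : Fin N → ℝ) (I : Fin N → Ω → ℝ)
    (hI01 : ∀ k, ∀ ω, I k ω = 0 ∨ I k ω = 1)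
    (hIint : ∀ k, Integrable (I k) μ)
    (hIint2 : ∀ k l, Integrable (fun ω => I k ω * I l ω) μ)
    (π : Fin N → ℝ)
    (hπ : ∀ k, π k = ∫ ω, I k ω ∂μ)
    (hπmem : ∀ k, π k ∈ Set.Ioc (0 : ℝ) 1)
    (π2 : Fin N → Fin N → ℝ)
    (hπ2 : ∀ k l, k ≠ l → π2 k l = ∫ ω, I k ω * I l ω ∂μ)
    (a : ℝ) (ha : a ∈ Set.Ioc (0 : ℝ) 1)
    (U2 : Finset (Fin N)) (K : ℕ) (hK : U2.card = K)
    (hU2 : ∀ k ∈ U2, π k ≤ a)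
    (πs : Fin N → ℝ)
    (hπs : ∀ k, πs k = if k ∈ U2 then a else π k)
    (lam : ℝ) (hlam : 0 < lam) (hlamπ : ∀ k, lam ≤ π k)
    (C : ℝ) (hC : 0 < C) (hy : ∀ k, |y k| ≤ C)
    (M : ℝ) (hM : 0 ≤ M)
    (hΔ : ∀ k l, k ≠ l → |π2 k l - π k * π l| ≤ M) :
    (∫ ω, ((N : ℝ)⁻¹ * (∑ k, I k ω * y k / πs k) - (N : ℝ)⁻¹ * ∑ k, y k) ^ 2 ∂μ)
      ≤ C ^ 2 * K ^ 2 / N ^ 2 + C ^ 2 / (lam * N) + C ^ 2 * M / lam ^ 2 := by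
  rcases Nat.eq_zero_or_pos N with hN | hN
  · subst hN
    simp only [Finset.univ_eq_empty, Finset.sum_empty, mul_zero, sub_zero, sub_self,
      ne_eq, zero_pow, integral_const]
    have : ((0:ℝ) - 0) ^ 2 = 0 := by ring
    simp [this]
    positivity
  have hNpos : (0:ℝ) < (N:ℝ) := by exact_mod_cast hN
  have hN0 : (N:ℝ) ≠ 0 := ne_of_gt hNpos
  -- basic facts about π and πs
  have hπpos : ∀ k, 0 < π k := fun k => (hπmem k).1
  have hπle1 : ∀ k, π k ≤ 1 := fun k => (hπmem k).2
  have hπle : ∀ k, π k ≤ πs k := by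
    intro k; rw [hπs k]; split
    · exact hU2 k (by assumption)
    · exact le_refl _
  have hlamπs : ∀ k, lam ≤ πs k := fun k => le_trans (hlamπ k) (hπle k)
  have hπspos : ∀ k, 0 < πs k := fun k => lt_of_lt_of_le hlam (hlamπs k)
  set w : Fin N → ℝ := fun k => y k / πs k with hw
  have hwabs : ∀ k, |w k| ≤ C / lam := by
    intro k
    rw [hw]
    simp only [abs_div, abs_of_pos (hπspos k)]
    exact div_le_div₀ hC.le (hy k) hlam (hlamπs k)
  have hy2 : ∀ k, y k ^ 2 ≤ C ^ 2 := by
    intro k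
    calc y k ^ 2 = |y k| ^ 2 := (sq_abs _).symm
    _ ≤ C ^ 2 := pow_le_pow_left₀ (abs_nonneg _) (hy k) 2
  set t : ℝ := ∑ k, y k with ht
  set P : Fin N → Fin N → ℝ := fun k l => if k = l then π k else π2 k l with hP
  -- rewrite integrand
  have hrw : ∀ ω, ((N : ℝ)⁻¹ * (∑ k, I k ω * y k / πs k) - (N : ℝ)⁻¹ * ∑ k, y k) ^ 2
      = ((N:ℝ)⁻¹)^2 * (∑ k, I k ω * w k - t) ^ 2 := by
    intro ω
    have : ∀ k, I k ω * y k / πs k = I k ω * w k := by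
      intro k; rw [hw]; ring
    simp_rw [this]
    ring
  rw [integral_congr_ae (Filter.Eventually.of_forall hrw)]
  rw [integral_const_mul]
  -- pointwise expansion
  have hsq : ∀ ω, (∑ k, I k ω * w k - t) ^ 2
      = (∑ k, ∑ l, (I k ω * I l ω) * (w k * w l)) + ((-2*t) * (∑ k, I k ω * w k) + t^2) := by
    intro ω
    have hS2 : (∑ k, I k ω * w k) ^ 2 = ∑ k, ∑ l, (I k ω * I l ω) * (w k * w l) := by
      rw [sq, Finset.sum_mul_sum]
      exact Finset.sum_congr rfl fun k _ => Finset.sum_congr rfl fun l _ => by ring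
    rw [← hS2]; ring
  simp_rw [hsq]
  -- integrability
  have hIntS : Integrable (fun ω => ∑ k, I k ω * w k) μ :=
    integrable_finset_sum _ fun k _ => (hIint k).mul_const _
  have hInt1 : Integrable (fun ω => ∑ k, ∑ l, (I k ω * I l ω) * (w k * w l)) μ :=
    integrable_finset_sum _ fun k _ => integrable_finset_sum _ fun l _ => (hIint2 k l).mul_const _
  have h2int : Integrable (fun ω => -2*t * (∑ k, I k ω * w k) + t^2) μ :=
    (hIntS.const_mul (-2*t)).add (integrable_const (t^2))
  have h3int : Integrable (fun ω => -2*t * (∑ k, I k ω * w k)) μ := hIntS.const_mul (-2*t)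
  rw [integral_add hInt1 h2int, integral_add h3int (integrable_const (t^2)),
    integral_const_mul, integral_const, probReal_univ, smul_eq_mul, one_mul]
  -- compute the integrals
  have hIkk : ∀ k, (∫ ω, I k ω * I k ω ∂μ) = π k := by
    intro k
    have : (fun ω => I k ω * I k ω) = I k := by
      funext ω; rcases hI01 k ω with h | h <;> simp [h]
    rw [this, hπ]
  have hIkl : ∀ k l, (∫ ω, I k ω * I l ω ∂μ) = P k l := by
    intro k l
    rw [hP]
    by_cases h : k = l
    · subst h; simp [hIkk k]
    · simp [h, (hπ2 k l h).symm]
  have hint1 : (∫ ω, ∑ k, ∑ l, (I k ω * I l ω) * (w k * w l) ∂μ)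
      = ∑ k, ∑ l, P k l * (w k * w l) := by
    rw [integral_finset_sum _ fun k _ => integrable_finset_sum _ fun l _ => (hIint2 k l).mul_const _]
    refine Finset.sum_congr rfl fun k _ => ?_
    rw [integral_finset_sum _ fun l _ => (hIint2 k l).mul_const _]
    refine Finset.sum_congr rfl fun l _ => ?_
    rw [integral_mul_const, hIkl]
  have hintS : (∫ ω, ∑ k, I k ω * w k ∂μ) = ∑ k, π k * w k := by
    rw [integral_finset_sum _ fun k _ => (hIint k).mul_const _]
    exact Finset.sum_congr rfl fun k _ => by rw [integral_mul_const, hπ]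
  rw [hint1, hintS]
  set B : ℝ := ∑ k, π k * w k with hB
  -- split the double sum
  have hB2 : B ^ 2 = ∑ k, ∑ l, (π k * π l) * (w k * w l) := by
    rw [hB, sq, Finset.sum_mul_sum]
    exact Finset.sum_congr rfl fun k _ => Finset.sum_congr rfl fun l _ => by ring
  have hsplit : ∑ k, ∑ l, P k l * (w k * w l)
      = (∑ k, ∑ l, (P k l - π k * π l) * (w k * w l)) + B ^ 2 := by
    rw [hB2, ← Finset.sum_add_distrib]
    refine Finset.sum_congr rfl fun k _ => ?_
    rw [← Finset.sum_add_distrib]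
    exact Finset.sum_congr rfl fun l _ => by ring
  set D : ℝ := ∑ k, ∑ l, (P k l - π k * π l) * (w k * w l) with hD
  -- bound D
  have hDdiag : ∀ k, (P k k - π k * π k) * (w k * w k) ≤ C^2 / lam := by
    intro k
    have hPkk : P k k = π k := by simp [hP]
    rw [hPkk, hw]
    have h1 : (π k - π k * π k) * (y k / πs k * (y k / πs k))
        = ((π k - π k * π k) * y k ^ 2) / πs k ^ 2 := by ring
    rw [h1, div_le_div_iff₀ (pow_pos (hπspos k) 2) hlam]
    have h2 : (π k - π k * π k) * y k ^ 2 * lam ≤ π k * C ^ 2 * lam := by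
      have hd : 0 ≤ π k - π k * π k := by nlinarith [hπpos k, hπle1 k]
      have : (π k - π k * π k) * y k ^ 2 ≤ π k * C ^ 2 := by
        nlinarith [hy2 k, sq_nonneg (y k), hπpos k, hπle1 k]
      exact mul_le_mul_of_nonneg_right this hlam.le
    refine le_trans h2 ?_
    nlinarith [mul_le_mul_of_nonneg_right
      (mul_le_mul (hπle k) (hlamπs k) hlam.le (hπspos k).le) (sq_nonneg C)]
  have hDoff : ∀ k l, k ≠ l → (P k l - π k * π l) * (w k * w l) ≤ M * C^2 / lam^2 := by
    intro k l hkl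
    have hPkl : P k l = π2 k l := by simp [hP, hkl]
    calc (P k l - π k * π l) * (w k * w l) ≤ |(P k l - π k * π l) * (w k * w l)| := le_abs_self _
    _ = |π2 k l - π k * π l| * (|w k| * |w l|) := by rw [hPkl, abs_mul, abs_mul]
    _ ≤ M * ((C/lam) * (C/lam)) := by
        refine mul_le_mul (hΔ k l hkl) ?_ (by positivity) hM
        exact mul_le_mul (hwabs k) (hwabs l) (abs_nonneg _) (by positivity)
    _ = M * C^2 / lam^2 := by field_simp
  have hrow : ∀ k, ∑ l, (P k l - π k * π l) * (w k * w l)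
      ≤ C^2/lam + N * (M * C^2 / lam^2) := by
    intro k
    rw [← Finset.add_sum_erase _ _ (Finset.mem_univ k)]
    refine add_le_add (hDdiag k) ?_
    calc ∑ l ∈ Finset.univ.erase k, (P k l - π k * π l) * (w k * w l)
        ≤ (Finset.univ.erase k).card • (M * C^2 / lam^2) := by
          refine Finset.sum_le_card_nsmul _ _ _ fun l hl => ?_
          exact hDoff k l (Ne.symm (Finset.ne_of_mem_erase hl))
    _ = ((Finset.univ.erase k).card : ℝ) * (M * C^2 / lam^2) := nsmul_eq_mul _ _
    _ ≤ N * (M * C^2 / lam^2) := by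
        refine mul_le_mul_of_nonneg_right ?_ (by positivity)
        have h := Finset.card_le_card (Finset.erase_subset k (Finset.univ : Finset (Fin N)))
        rw [Finset.card_univ, Fintype.card_fin] at h
        exact_mod_cast h
  have hDle : D ≤ N * (C^2/lam) + N^2 * (M * C^2 / lam^2) := by
    calc D ≤ ∑ _k : Fin N, (C^2/lam + N * (M * C^2 / lam^2)) :=
      Finset.sum_le_sum fun k _ => hrow k
    _ = N * (C^2/lam + N * (M * C^2 / lam^2)) := by
        rw [Finset.sum_const, Finset.card_univ, Fintype.card_fin, nsmul_eq_mul]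
    _ = N * (C^2/lam) + N^2 * (M * C^2 / lam^2) := by ring
  -- bound the bias
  have hBt : |B - t| ≤ K * C := by
    have hBtsum : B - t = ∑ k ∈ U2, (π k * w k - y k) := by
      rw [hB, ht, ← Finset.sum_sub_distrib]
      refine (Finset.sum_subset (Finset.subset_univ U2) fun k _ hk => ?_).symm
      have : πs k = π k := by rw [hπs]; simp [hk]
      rw [hw]
      simp only [this]
      rw [mul_div_cancel₀ _ (ne_of_gt (hπpos k))]
      ring
    rw [hBtsum]
    calc |∑ k ∈ U2, (π k * w k - y k)| ≤ ∑ k ∈ U2, |π k * w k - y k| :=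
      Finset.abs_sum_le_sum_abs _ _
    _ ≤ U2.card • C := by
        refine Finset.sum_le_card_nsmul _ _ _ fun k hk => ?_
        have hπsa : πs k = a := by rw [hπs]; simp [hk]
        have heq : π k * w k - y k = y k * (π k / a - 1) := by
          rw [hw]; simp only [hπsa]; field_simp
        rw [heq, abs_mul]
        have habs1 : |π k / a - 1| ≤ 1 := by
          rw [abs_le]
          constructor
          · have : 0 ≤ π k / a := le_of_lt (div_pos (hπpos k) ha.1)
            linarith
          · have : π k / a ≤ 1 := (div_le_one ha.1).mpr (hU2 k hk)
            linarith
        calc |y k| * |π k / a - 1| ≤ C * 1 :=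
          mul_le_mul (hy k) habs1 (abs_nonneg _) hC.le
        _ = C := mul_one C
    _ = (K : ℝ) * C := by rw [hK, nsmul_eq_mul]
  have hBt2 : (B - t)^2 ≤ (K * C)^2 := by
    calc (B - t)^2 = |B - t|^2 := (sq_abs _).symm
    _ ≤ (K * C)^2 := pow_le_pow_left₀ (abs_nonneg _) hBt 2
  -- assemble
  have hfinal : (∑ k, ∑ l, P k l * (w k * w l)) + (-2*t * B + t^2)
      ≤ (K*C)^2 + (N * (C^2/lam) + N^2 * (M * C^2 / lam^2)) := by
    rw [hsplit]
    have : (∑ k, ∑ l, (P k l - π k * π l) * (w k * w l)) + B ^ 2 + (-2*t * B + t^2)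
        = D + (B - t)^2 := by rw [hD]; ring
    rw [this]
    linarith [hDle, hBt2]
  calc ((N:ℝ)⁻¹)^2 * ((∑ k, ∑ l, P k l * (w k * w l)) + (-2*t * B + t^2))
      ≤ ((N:ℝ)⁻¹)^2 * ((K*C)^2 + (N * (C^2/lam) + N^2 * (M * C^2 / lam^2))) :=
        mul_le_mul_of_nonneg_left hfinal (by positivity)
  _ = C ^ 2 * K ^ 2 / N ^ 2 + C ^ 2 / (lam * N) + C ^ 2 * M / lam ^ 2 :=
      iht_arith (N:ℝ) (K:ℝ) C lam M hN0 (ne_of_gt hlam)
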